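/- Let $u, \tilde u : [0,T] \to \{0,1\}$ be piecewise constant functions with the same initial value $u(0) = \tilde u(0)$ and the same number $N$ of switching times $\tau_1 < \dots < \tau_N$ and $\tilde\tau_1 < \dots < \tilde\tau_N$ respectively. Then $\|u - \tilde u\|_{L^1([0,T])} \le \sum_{i=1}^N |\tau_i - \tilde\tau_i| \le N \max_{1 \le i \le N} |\tau_i - \tilde\tau_i|$. -/

import Mathlib

open MeasureTheory

/-- The piecewise-constant `{0,1}`-valued function on `[0,T]` with initial
value `u0` and switching times `τ 1, …, τ N`: its value at `t` is `u0` if the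
number of switching times `≤ t` is even, `1 - u0` otherwise. -/
noncomputable def pcControl (u0 : ℝ) (N : ℕ) (τ : ℕ → ℝ) (t : ℝ) : ℝ :=
  if Even (((Finset.Icc 1 N).filter fun i => τ i ≤ t).card) then u0 else 1 - u0

lemma pc_measurable (u0 : ℝ) (N : ℕ) (τ : ℕ → ℝ) : Measurable (pcControl u0 N τ) := by
  unfold pcControl
  have hc : Measurable (fun t => ((Finset.Icc 1 N).filter fun i => τ i ≤ t).card) := by
    simp only [Finset.card_filter]
    apply Finset.measurable_sum
    intro i _
    exact Measurable.ite measurableSet_Ici measurable_const measurable_const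
  have hev : MeasurableSet {n : ℕ | Even n} := trivial
  exact Measurable.ite (hc hev) measurable_const measurable_const

lemma g_eq_indicator (a b : ℝ) (t : ℝ) :
    |(if a ≤ t then (1:ℝ) else 0) - (if b ≤ t then (1:ℝ) else 0)|
      = (Set.Ico (min a b) (max a b)).indicator (fun _ => (1:ℝ)) t := by
  by_cases h1 : a ≤ t <;> by_cases h2 : b ≤ t
  · rw [if_pos h1, if_pos h2, sub_self, abs_zero,
      Set.indicator_of_notMem (fun h => absurd (Set.mem_Ico.1 h).2 (not_lt.2 (max_le h1 h2)))]
  · rw [if_pos h1, if_neg h2, sub_zero, abs_one,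
      Set.indicator_of_mem (Set.mem_Ico.2 ⟨le_trans (min_le_left a b) h1,
        lt_of_lt_of_le (lt_of_not_ge h2) (le_max_right a b)⟩)]
  · rw [if_neg h1, if_pos h2, zero_sub, abs_neg, abs_one,
      Set.indicator_of_mem (Set.mem_Ico.2 ⟨le_trans (min_le_right a b) h2,
        lt_of_lt_of_le (lt_of_not_ge h1) (le_max_left a b)⟩)]
  · rw [if_neg h1, if_neg h2, sub_self, abs_zero,
      Set.indicator_of_notMem
        (fun h => ((min_le_iff.1 (Set.mem_Ico.1 h).1).elim h1 h2))]

lemma pointwise_bound (u0 : ℝ) (hu0 : u0 = 0 ∨ u0 = 1) (N : ℕ) (τ τ' : ℕ → ℝ) (t : ℝ) :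
    |pcControl u0 N τ t - pcControl u0 N τ' t|
      ≤ ∑ i ∈ Finset.Icc 1 N,
          |(if τ i ≤ t then (1:ℝ) else 0) - (if τ' i ≤ t then (1:ℝ) else 0)| := by
  set c := ((Finset.Icc 1 N).filter fun i => τ i ≤ t).card with hc
  set c' := ((Finset.Icc 1 N).filter fun i => τ' i ≤ t).card with hc'
  by_cases hpar : (Even c ↔ Even c')
  · have : pcControl u0 N τ t = pcControl u0 N τ' t := by
      unfold pcControl
      by_cases h : Even c
      · rw [if_pos h, if_pos (hpar.1 h)]
      · rw [if_neg h, if_neg (fun h' => h (hpar.2 h'))]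
    rw [this, sub_self, abs_zero]
    exact Finset.sum_nonneg fun i _ => abs_nonneg _
  · have hne : c ≠ c' := fun h => hpar (by rw [h])
    have h1 : |pcControl u0 N τ t - pcControl u0 N τ' t| ≤ 1 := by
      unfold pcControl
      rcases hu0 with h | h <;>
        · by_cases ha : Even c <;> by_cases hb : Even c' <;>
            simp [← hc, ← hc', ha, hb, h]
    refine h1.trans ?_
    have hsum : (c : ℝ) - (c' : ℝ) = ∑ i ∈ Finset.Icc 1 N,
        ((if τ i ≤ t then (1:ℝ) else 0) - (if τ' i ≤ t then (1:ℝ) else 0)) := by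
      rw [Finset.sum_sub_distrib, hc, hc']
      push_cast [Finset.card_filter]
      simp
    have h2 : (1:ℝ) ≤ |(c : ℝ) - (c' : ℝ)| := by
      have : ((c : ℤ) : ℝ) - ((c' : ℤ) : ℝ) = (c:ℝ) - (c':ℝ) := by push_cast; ring
      rw [← this, ← Int.cast_sub, ← Int.cast_abs]
      have : 1 ≤ |(c : ℤ) - (c' : ℤ)| := by
        refine Int.one_le_abs ?_
        simpa using sub_ne_zero.2 (fun h => hne (by exact_mod_cast h))
      exact_mod_cast this
    calc (1:ℝ) ≤ |(c : ℝ) - (c' : ℝ)| := h2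
      _ = |∑ i ∈ Finset.Icc 1 N, ((if τ i ≤ t then (1:ℝ) else 0) - (if τ' i ≤ t then (1:ℝ) else 0))| := by rw [hsum]
      _ ≤ _ := Finset.abs_sum_le_sum_abs _ _

/-- two piecewise constant controls with the same initial value
and the same number `N` of switching times differ in `L¹([0,T])` by at most
the sum of the distances between corresponding switching times, which is at
most `N` times the largest such distance. -/
theorem stmt2 (T : ℝ) (hT : 0 < T) (N : ℕ) (hN : 1 ≤ N) (u0 : ℝ)
    (hu0 : u0 = 0 ∨ u0 = 1) (τ τ' : ℕ → ℝ)
    (hτ : ∀ i ∈ Finset.Icc 1 N, 0 < τ i ∧ τ i < T)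
    (hτ' : ∀ i ∈ Finset.Icc 1 N, 0 < τ' i ∧ τ' i < T)
    (hmono : ∀ i ∈ Finset.Icc 1 N, ∀ j ∈ Finset.Icc 1 N, i < j → τ i < τ j)
    (hmono' : ∀ i ∈ Finset.Icc 1 N, ∀ j ∈ Finset.Icc 1 N, i < j → τ' i < τ' j) :
    (∫ t in Set.Icc (0 : ℝ) T, |pcControl u0 N τ t - pcControl u0 N τ' t|)
        ≤ ∑ i ∈ Finset.Icc 1 N, |τ i - τ' i| ∧
    ∑ i ∈ Finset.Icc 1 N, |τ i - τ' i|
        ≤ (N : ℝ) * (Finset.Icc 1 N).sup' (by simp [hN] : (Finset.Icc 1 N).Nonempty)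
            (fun i => |τ i - τ' i|) := by
  constructor
  · -- L¹ bound
    set μ := volume.restrict (Set.Icc (0:ℝ) T) with hμ
    haveI : IsFiniteMeasure μ := by
      rw [hμ]
      exact ⟨by simp [Measure.restrict_apply_univ]⟩
    set g : ℕ → ℝ → ℝ := fun i t =>
      |(if τ i ≤ t then (1:ℝ) else 0) - (if τ' i ≤ t then (1:ℝ) else 0)| with hg
    have hgmeas : ∀ i, Measurable (g i) := by
      intro i
      apply Measurable.abs
      exact (Measurable.ite measurableSet_Ici measurable_const measurable_const).sub
        (Measurable.ite measurableSet_Ici measurable_const measurable_const)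
    have hgint : ∀ i, Integrable (g i) μ := by
      intro i
      refine Integrable.mono' (integrable_const 1) ((hgmeas i).aestronglyMeasurable) ?_
      filter_upwards with t
      rw [Real.norm_eq_abs, abs_abs]
      by_cases h1 : τ i ≤ t <;> by_cases h2 : τ' i ≤ t <;> simp [hg, h1, h2]
    have hfint : Integrable (fun t => |pcControl u0 N τ t - pcControl u0 N τ' t|) μ := by
      refine Integrable.mono' (integrable_const 2)
        (((pc_measurable u0 N τ).sub (pc_measurable u0 N τ')).abs.aestronglyMeasurable) ?_
      filter_upwards with t
      rw [Real.norm_eq_abs, abs_abs]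
      have h1 : |pcControl u0 N τ t| ≤ 1 := by
        unfold pcControl; rcases hu0 with h | h <;> split <;> simp [h]
      have h2 : |pcControl u0 N τ' t| ≤ 1 := by
        unfold pcControl; rcases hu0 with h | h <;> split <;> simp [h]
      calc |pcControl u0 N τ t - pcControl u0 N τ' t|
          ≤ |pcControl u0 N τ t| + |pcControl u0 N τ' t| := abs_sub _ _
        _ ≤ 2 := by linarith
    have step1 : (∫ t, |pcControl u0 N τ t - pcControl u0 N τ' t| ∂μ)
        ≤ ∫ t, (∑ i ∈ Finset.Icc 1 N, g i t) ∂μ := by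
      refine integral_mono hfint (integrable_finset_sum _ fun i _ => hgint i) ?_
      intro t
      exact pointwise_bound u0 hu0 N τ τ' t
    have step2 : (∫ t, (∑ i ∈ Finset.Icc 1 N, g i t) ∂μ)
        = ∑ i ∈ Finset.Icc 1 N, ∫ t, g i t ∂μ :=
      integral_finset_sum _ fun i _ => hgint i
    have step3 : ∀ i ∈ Finset.Icc 1 N, (∫ t, g i t ∂μ) ≤ |τ i - τ' i| := by
      intro i _
      have heq : ∀ t, g i t = (Set.Ico (min (τ i) (τ' i)) (max (τ i) (τ' i))).indicator
          (fun _ => (1:ℝ)) t := fun t => g_eq_indicator (τ i) (τ' i) t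
      calc (∫ t, g i t ∂μ)
          = ∫ t, (Set.Ico (min (τ i) (τ' i)) (max (τ i) (τ' i))).indicator
              (fun _ => (1:ℝ)) t ∂μ := by simp_rw [heq]
        _ = ∫ t in Set.Ico (min (τ i) (τ' i)) (max (τ i) (τ' i)), (1:ℝ) ∂μ :=
            integral_indicator measurableSet_Ico
        _ = (μ (Set.Ico (min (τ i) (τ' i)) (max (τ i) (τ' i)))).toReal • (1:ℝ) :=
            setIntegral_const 1
        _ ≤ |τ i - τ' i| := by
            rw [smul_eq_mul, mul_one]
            have hle : μ (Set.Ico (min (τ i) (τ' i)) (max (τ i) (τ' i)))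
                ≤ ENNReal.ofReal (|τ i - τ' i|) := by
              calc μ _ ≤ volume (Set.Ico (min (τ i) (τ' i)) (max (τ i) (τ' i))) :=
                    Measure.restrict_le_self _
                _ = ENNReal.ofReal (max (τ i) (τ' i) - min (τ i) (τ' i)) := by
                    rw [Real.volume_Ico]
                _ = ENNReal.ofReal (|τ i - τ' i|) := by rw [max_sub_min_eq_abs, abs_sub_comm]
            calc (μ _).toReal ≤ (ENNReal.ofReal (|τ i - τ' i|)).toReal :=
                  ENNReal.toReal_mono ENNReal.ofReal_ne_top hle
              _ = |τ i - τ' i| := ENNReal.toReal_ofReal (abs_nonneg _)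
    calc (∫ t, |pcControl u0 N τ t - pcControl u0 N τ' t| ∂μ)
        ≤ ∫ t, (∑ i ∈ Finset.Icc 1 N, g i t) ∂μ := step1
      _ = ∑ i ∈ Finset.Icc 1 N, ∫ t, g i t ∂μ := step2
      _ ≤ ∑ i ∈ Finset.Icc 1 N, |τ i - τ' i| := Finset.sum_le_sum step3
  · -- sum ≤ N * sup'
    have hne : (Finset.Icc 1 N).Nonempty := by simp [hN]
    have := Finset.sum_le_card_nsmul (Finset.Icc 1 N) (fun i => |τ i - τ' i|)
      ((Finset.Icc 1 N).sup' hne (fun i => |τ i - τ' i|))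
      (fun i hi => Finset.le_sup' (fun i => |τ i - τ' i|) hi)
    simpa [Nat.card_Icc, nsmul_eq_mul] using this
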